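/- The lexicographic order on the power set of ℕ is a complete lattice: every subset of 2^ℕ has a supremum (and an infimum) with respect to the lexicographic order. -/
import Mathlib


/-- The lexicographic order on the power set of `ℕ`:
`I ≤ J` iff `inf (J \ I) ≤ inf (I \ J)`, where the infimum of the empty set is `∞`. -/
def lexLE (I J : Set ℕ) : Prop :=
  (⨅ n ∈ J \ I, (n : ℕ∞)) ≤ ⨅ n ∈ I \ J, (n : ℕ∞)

/-- `I` is a supremum of `S` with respect to the lexicographic order. -/
def lexIsLUB (S : Set (Set ℕ)) (I : Set ℕ) : Prop :=
  (∀ J ∈ S, lexLE J I) ∧ ∀ K : Set ℕ, (∀ J ∈ S, lexLE J K) → lexLE I K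

/-- `I` is an infimum of `S` with respect to the lexicographic order. -/
def lexIsGLB (S : Set (Set ℕ)) (I : Set ℕ) : Prop :=
  (∀ J ∈ S, lexLE I J) ∧ ∀ K : Set ℕ, (∀ J ∈ S, lexLE K J) → lexLE K I

open Classical in
lemma lexLE_iff (I J : Set ℕ) :
    lexLE I J ↔ ∀ n ∈ I \ J, ∃ m ∈ J \ I, m < n := by
  constructor
  · intro h n hn
    have h2 : (⨅ m ∈ I \ J, (m : ℕ∞)) ≤ (n : ℕ∞) := iInf₂_le n hn
    have h3 : (⨅ m ∈ J \ I, (m : ℕ∞)) ≤ (n : ℕ∞) := le_trans h h2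
    have hne : ∃ m, m ∈ J \ I := by
      by_contra hc
      push_neg at hc
      have : (J \ I) = (∅ : Set ℕ) := Set.eq_empty_iff_forall_notMem.2 hc
      rw [this] at h3
      simp at h3
    set m := Nat.find hne with hm
    have hmJI : m ∈ J \ I := Nat.find_spec hne
    have hle : (m : ℕ∞) ≤ ⨅ k ∈ J \ I, (k : ℕ∞) :=
      le_iInf₂ fun k hk => Nat.cast_le.2 (Nat.find_min' hne hk)
    have hmn : m ≤ n := Nat.cast_le.1 (hle.trans h3)
    have hne' : m ≠ n := fun he => hn.2 (he ▸ hmJI.1)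
    exact ⟨m, hmJI, lt_of_le_of_ne hmn hne'⟩
  · intro h
    rcases Set.eq_empty_or_nonempty (I \ J) with he | hne
    · unfold lexLE
      rw [he]
      simp
    · obtain ⟨n, hn⟩ := hne
      have hne' : ∃ k, k ∈ I \ J := ⟨n, hn⟩
      set n0 := Nat.find hne' with hn0
      have hn0IJ : n0 ∈ I \ J := Nat.find_spec hne'
      obtain ⟨m, hmJI, hmlt⟩ := h n0 hn0IJ
      have h1 : (⨅ k ∈ J \ I, (k : ℕ∞)) ≤ (m : ℕ∞) := iInf₂_le m hmJI
      have h2 : (n0 : ℕ∞) ≤ ⨅ k ∈ I \ J, (k : ℕ∞) :=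
        le_iInf₂ fun k hk => Nat.cast_le.2 (Nat.find_min' hne' hk)
      exact h1.trans ((Nat.cast_le.2 hmlt.le).trans h2)

lemma lexLE_compl (I J : Set ℕ) : lexLE Jᶜ Iᶜ ↔ lexLE I J := by
  have hd : ∀ A B : Set ℕ, Aᶜ \ Bᶜ = B \ A := by
    intro A B; ext x; simp [Set.mem_diff]; tauto
  unfold lexLE
  rw [hd, hd]

/-- Greedy construction of the lexicographic supremum: `n` belongs iff some member of `S`
contains `n` and agrees with the construction below `n`. -/
def supP (S : Set (Set ℕ)) (n : ℕ) : Prop :=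
  ∃ J ∈ S, n ∈ J ∧ ∀ m, m < n → (m ∈ J ↔ supP S m)
termination_by n

open Classical in
lemma supP_isLUB (S : Set (Set ℕ)) : lexIsLUB S {n | supP S n} := by
  set I : Set ℕ := {n | supP S n} with hI
  have hmem : ∀ n, n ∈ I ↔ ∃ J ∈ S, n ∈ J ∧ ∀ m, m < n → (m ∈ J ↔ m ∈ I) := by
    intro n
    rw [hI, Set.mem_setOf_eq, supP]
    rfl
  constructor
  · intro J hJ
    rw [lexLE_iff]
    rintro n ⟨hnJ, hnI⟩
    have hnot : ¬ (n ∈ J ∧ ∀ m, m < n → (m ∈ J ↔ m ∈ I)) := by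
      intro hc
      exact hnI ((hmem n).2 ⟨J, hJ, hc.1, hc.2⟩)
    have hex : ∃ m, m < n ∧ ¬ (m ∈ J ↔ m ∈ I) := by
      by_contra hc
      push_neg at hc
      exact hnot ⟨hnJ, fun m hm => hc m hm⟩
    set m := Nat.find hex with hm
    obtain ⟨hmn, hmiff⟩ := Nat.find_spec hex
    have hmin : ∀ k, k < m → (k ∈ J ↔ k ∈ I) := by
      intro k hk
      by_contra hc
      exact absurd (Nat.find_min' hex ⟨hk.trans hmn, hc⟩) (not_le.2 hk)
    by_cases hmJ : m ∈ J
    · exact absurd ((hmem m).2 ⟨J, hJ, hmJ, hmin⟩) (fun h => hmiff ⟨fun _ => h, fun _ => hmJ⟩)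
    · have hmI : m ∈ I := by
        by_contra hc
        exact hmiff ⟨fun h => absurd h hmJ, fun h => absurd h hc⟩
      exact ⟨m, ⟨hmI, hmJ⟩, hmn⟩
  · intro K hK
    rw [lexLE_iff]
    rintro n ⟨hnI, hnK⟩
    obtain ⟨J, hJ, hnJ, hagree⟩ := (hmem n).1 hnI
    have hJK := (lexLE_iff J K).1 (hK J hJ) n ⟨hnJ, hnK⟩
    obtain ⟨m, ⟨hmK, hmJ⟩, hmn⟩ := hJK
    refine ⟨m, ⟨hmK, ?_⟩, hmn⟩
    intro hmI
    exact hmJ ((hagree m hmn).2 hmI)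

/-- The lexicographically ordered power set of `ℕ` is complete: every subset has a
supremum (and an infimum). -/
theorem lex_complete (S : Set (Set ℕ)) :
    (∃ I : Set ℕ, lexIsLUB S I) ∧ (∃ I : Set ℕ, lexIsGLB S I) := by
  constructor
  · exact ⟨_, supP_isLUB S⟩
  · set T : Set (Set ℕ) := compl '' S with hT
    obtain ⟨hub, hlub⟩ := supP_isLUB T
    set I : Set ℕ := {n | supP T n} with hI
    refine ⟨Iᶜ, ?_, ?_⟩
    · intro J hJ
      have h1 : lexLE Jᶜ I := hub Jᶜ ⟨J, hJ, rfl⟩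
      refine (lexLE_compl Iᶜ J).1 ?_
      rw [compl_compl]
      exact h1
    · intro K hK
      have h2 : ∀ J' ∈ T, lexLE J' Kᶜ := by
        rintro J' ⟨J, hJ, rfl⟩
        exact (lexLE_compl K J).2 (hK J hJ)
      have h3 : lexLE I Kᶜ := hlub Kᶜ h2
      refine (lexLE_compl K Iᶜ).1 ?_
      rw [compl_compl]
      exact h3
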